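/- For every continuous valuation μ on X, lower semicontinuous functions h, k : X → [0,∞], and nonnegative reals r, s, the Choquet integral is linear in the integrand: ∫ (r·h + s·k) dμ = r·∫ h dμ + s·∫ k dμ. -/

import Mathlib

open Set ENNReal NNReal TopologicalSpace MeasureTheory
open scoped Classical

/-- A continuous valuation on a topological space `X`: a strict, monotone, modular,
Scott-continuous map from the open sets of `X` to `ℝ≥0∞`. -/
structure ContValuation (X : Type*) [TopologicalSpace X] where
  toFun : Opens X → ℝ≥0∞
  strict' : toFun ⊥ = 0
  mono' : ∀ U V : Opens X, U ≤ V → toFun U ≤ toFun V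
  modular' : ∀ U V : Opens X, toFun U + toFun V = toFun (U ⊔ V) + toFun (U ⊓ V)
  scott' : ∀ S : Set (Opens X), S.Nonempty → DirectedOn (· ≤ ·) S →
    toFun (sSup S) = ⨆ U ∈ S, toFun U

/-- The stochastic order on continuous valuations: pointwise order on open sets. -/
def stochLE {X : Type*} [TopologicalSpace X] (μ ν : ContValuation X) : Prop :=
  ∀ U : Opens X, μ.toFun U ≤ ν.toFun U

/-- The Choquet integral `∫ h dμ = ∫₀^∞ μ(h⁻¹(r,∞]) dr` of a lower semicontinuous
function `h : X → ℝ≥0∞` with respect to a continuous valuation `μ`. -/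
noncomputable def choquet {X : Type*} [TopologicalSpace X] (μ : ContValuation X)
    (h : X → ℝ≥0∞) (hh : LowerSemicontinuous h) : ℝ≥0∞ :=
  ∫⁻ r in Set.Ioi (0 : ℝ), μ.toFun ⟨h ⁻¹' Set.Ioi (ENNReal.ofReal r), hh.isOpen_preimage _⟩

namespace ChoquetAux

variable {X : Type*} [TopologicalSpace X]

/-- Level set of a lower semicontinuous function, as an open set. -/
def lvl (h : X → ℝ≥0∞) (hh : LowerSemicontinuous h) (t : ℝ) : Opens X :=
  ⟨h ⁻¹' Set.Ioi (ENNReal.ofReal t), hh.isOpen_preimage _⟩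

lemma mem_lvl {h : X → ℝ≥0∞} {hh : LowerSemicontinuous h} {t : ℝ} {x : X} :
    x ∈ lvl h hh t ↔ ENNReal.ofReal t < h x := Iff.rfl

lemma choquet_eq (μ : ContValuation X) (h : X → ℝ≥0∞) (hh : LowerSemicontinuous h) :
    choquet μ h hh = ∫⁻ t in Set.Ioi (0 : ℝ), μ.toFun (lvl h hh t) := rfl

lemma lvl_antitone (h : X → ℝ≥0∞) (hh : LowerSemicontinuous h) : Antitone (lvl h hh) :=
  fun a b hab => fun x hx => lt_of_le_of_lt (ENNReal.ofReal_le_ofReal hab) hx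

lemma lvl_mono {h k : X → ℝ≥0∞} (hh : LowerSemicontinuous h) (hk : LowerSemicontinuous k)
    (hle : ∀ x, h x ≤ k x) (t : ℝ) : lvl h hh t ≤ lvl k hk t :=
  fun x hx => lt_of_lt_of_le hx (hle x)

lemma meas_val (μ : ContValuation X) (A : ℝ → Opens X) (hA : Antitone A) :
    Measurable fun t => μ.toFun (A t) :=
  Antitone.measurable (fun a b hab => μ.mono' _ _ (hA hab))

lemma choquet_congr (μ : ContValuation X) {f g : X → ℝ≥0∞} (hf : LowerSemicontinuous f)
    (hg : LowerSemicontinuous g) (e : ∀ x, f x = g x) : choquet μ f hf = choquet μ g hg := by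
  have : f = g := funext e
  subst this; rfl

lemma choquet_mono (μ : ContValuation X) {f g : X → ℝ≥0∞} (hf : LowerSemicontinuous f)
    (hg : LowerSemicontinuous g) (hle : ∀ x, f x ≤ g x) :
    choquet μ f hf ≤ choquet μ g hg :=
  lintegral_mono fun t => μ.mono' _ _ (lvl_mono hf hg hle t)

lemma choquet_zero (μ : ContValuation X) :
    choquet μ (fun _ => 0) lowerSemicontinuous_const = 0 := by
  rw [choquet_eq]
  rw [setLIntegral_congr_fun_ae measurableSet_Ioi
    (Filter.Eventually.of_forall (fun t (ht : t ∈ Set.Ioi (0:ℝ)) => ?_)), lintegral_zero]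
  have : lvl (fun _ : X => (0:ℝ≥0∞)) lowerSemicontinuous_const t = ⊥ := by
    apply Opens.ext
    simp only [lvl, Opens.coe_bot]
    ext x
    simp [not_lt_of_ge (le_of_lt (ENNReal.ofReal_pos.mpr ht))]
  rw [this, μ.strict']


lemma shift_lintegral (ψ : ℝ → ℝ≥0∞) (c : ℝ) :
    ∫⁻ t in Set.Ioi c, ψ (t - c) = ∫⁻ t in Set.Ioi (0:ℝ), ψ t := by
  have := (measurePreserving_add_right (volume : Measure ℝ) c).setLIntegral_comp_emb
    (Homeomorph.addRight c).measurableEmbedding (fun t => ψ (t - c)) (Set.Ioi 0)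
  rw [Set.image_add_const_Ioi, zero_add] at this
  rw [← this]
  congr 1
  ext t
  simp [add_sub_cancel_right]

lemma choquet_add_indicator (μ : ContValuation X) (f : X → ℝ≥0∞) (hf : LowerSemicontinuous f)
    (c : ℝ≥0) (U : Opens X)
    (hg : LowerSemicontinuous fun x => f x + (U : Set X).indicator (fun _ => (c:ℝ≥0∞)) x) :
    choquet μ (fun x => f x + (U : Set X).indicator (fun _ => (c:ℝ≥0∞)) x) hg
      = choquet μ f hf + c * μ.toFun U := by
  rcases eq_or_lt_of_le (zero_le : (0:ℝ≥0) ≤ c) with hc | hc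
  · rw [choquet_congr μ hg hf (fun x => by simp [← hc])]
    simp [← hc]
  -- main case : 0 < c
  set g : X → ℝ≥0∞ := fun x => f x + (U : Set X).indicator (fun _ => (c:ℝ≥0∞)) x with hgdef
  have hfg : ∀ x, f x ≤ g x := fun x => le_add_of_nonneg_right zero_le
  have hVo : LowerSemicontinuous fun x => f x + (c : ℝ≥0∞) :=
    hf.add lowerSemicontinuous_const
  set V : ℝ → Opens X := fun t =>
    ⟨(fun x => f x + (c:ℝ≥0∞)) ⁻¹' Set.Ioi (ENNReal.ofReal t), hVo.isOpen_preimage _⟩ with hVdef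
  have hVanti : Antitone V := fun a b hab x hx =>
    lt_of_le_of_lt (ENNReal.ofReal_le_ofReal hab) hx
  have claim1 : ∀ t, lvl g hg t = lvl f hf t ⊔ (U ⊓ V t) := by
    intro t
    apply Opens.ext
    ext x
    simp only [lvl, hVdef, Opens.coe_sup, Opens.coe_inf, Set.mem_union, Set.mem_inter_iff,
      Set.mem_preimage, Set.mem_Ioi, SetLike.mem_coe]
    constructor
    · intro hx
      by_cases hxU : x ∈ U
      · exact Or.inr ⟨hxU, by simpa [hgdef, Set.indicator_of_mem hxU] using hx⟩
      · exact Or.inl (by simpa [hgdef, Set.indicator_of_notMem hxU] using hx)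
    · rintro (hx | ⟨hxU, hx⟩)
      · exact lt_of_lt_of_le hx (hfg x)
      · simpa [hgdef, Set.indicator_of_mem hxU] using hx
  have claim2 : ∀ t, lvl f hf t ⊓ (U ⊓ V t) = U ⊓ lvl f hf t := by
    intro t
    have hsub : lvl f hf t ≤ V t := fun x hx =>
      show ENNReal.ofReal t < f x + (c:ℝ≥0∞) from lt_of_lt_of_le hx le_self_add
    rw [inf_comm (lvl f hf t), inf_assoc]
    congr 1
    exact inf_eq_right.mpr hsub
  have key : ∀ t, μ.toFun (lvl f hf t) + μ.toFun (U ⊓ V t)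
      = μ.toFun (lvl g hg t) + μ.toFun (U ⊓ lvl f hf t) := by
    intro t
    rw [μ.modular' (lvl f hf t) (U ⊓ V t), claim1 t, claim2 t]
  set A : ℝ≥0∞ := ∫⁻ t in Set.Ioi (0:ℝ), μ.toFun (U ⊓ lvl f hf t) with hA
  set B : ℝ≥0∞ := ∫⁻ t in Set.Ioi (0:ℝ), μ.toFun (U ⊓ V t) with hB
  have hUlvl_anti : Antitone fun t => U ⊓ lvl f hf t :=
    fun a b hab => inf_le_inf_left U (lvl_antitone f hf hab)
  have hUV_anti : Antitone fun t => U ⊓ V t := fun a b hab => inf_le_inf_left U (hVanti hab)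
  have hsum : choquet μ f hf + B = choquet μ g hg + A := by
    rw [choquet_eq, choquet_eq, hA, hB,
      ← lintegral_add_left (meas_val μ _ (lvl_antitone f hf)) _,
      ← lintegral_add_left (meas_val μ _ (lvl_antitone g hg)) _]
    exact lintegral_congr fun t => key t
  have hcR : (0:ℝ) < (c:ℝ) := NNReal.coe_pos.mpr hc
  have hBeq : B = ↑c * μ.toFun U + A := by
    rw [hB, ← Set.Ioc_union_Ioi_eq_Ioi hcR.le,
      lintegral_union measurableSet_Ioi (Set.Ioc_disjoint_Ioi le_rfl)]
    congr 1
    · -- ∫ over Ioc 0 c equals c * μ U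
      rw [← setLIntegral_congr (Ioo_ae_eq_Ioc (α := ℝ) (a := 0) (b := (c:ℝ)))]
      rw [setLIntegral_congr_fun_ae measurableSet_Ioo
        (Filter.Eventually.of_forall (fun t ht => ?_)), setLIntegral_const]
      · rw [Real.volume_Ioo, sub_zero, mul_comm, ← ENNReal.ofReal_coe_nnreal]
      · -- on Ioo 0 c : U ⊓ V t = U
        have hVtop : V t = ⊤ := by
          apply Opens.ext
          ext x
          simp only [hVdef, Set.mem_preimage, Set.mem_Ioi, Opens.coe_top, Set.mem_univ, iff_true]
          calc ENNReal.ofReal t < (c:ℝ≥0∞) := by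
                rw [← ENNReal.ofReal_coe_nnreal]
                exact (ENNReal.ofReal_lt_ofReal_iff hcR).mpr ht.2
            _ ≤ f x + (c:ℝ≥0∞) := le_add_self
        rw [hVtop, inf_top_eq]
    · -- ∫ over Ioi c equals A
      rw [setLIntegral_congr_fun_ae measurableSet_Ioi
        (Filter.Eventually.of_forall (fun t (ht : t ∈ Set.Ioi (c:ℝ)) => ?_))]
      · exact shift_lintegral (fun u => μ.toFun (U ⊓ lvl f hf u)) (c:ℝ)
      · -- μ (U ⊓ V t) = μ (U ⊓ lvl f hf (t - c))
        congr 1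
        apply Opens.ext
        ext x
        have hof : ENNReal.ofReal t = ENNReal.ofReal (t - (c:ℝ)) + (c:ℝ≥0∞) := by
          rw [← ENNReal.ofReal_coe_nnreal, ← ENNReal.ofReal_add
            (sub_nonneg.mpr (le_of_lt (Set.mem_Ioi.mp ht))) c.coe_nonneg, sub_add_cancel]
        simp only [hVdef, lvl, Opens.coe_inf, Set.mem_inter_iff, Set.mem_preimage, Set.mem_Ioi,
          SetLike.mem_coe]
        constructor
        · rintro ⟨hxU, hx⟩
          refine ⟨hxU, ?_⟩
          rw [hof] at hx
          exact (ENNReal.add_lt_add_iff_right ENNReal.coe_ne_top).mp hx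
        · rintro ⟨hxU, hx⟩
          refine ⟨hxU, ?_⟩
          rw [hof]
          exact (ENNReal.add_lt_add_iff_right ENNReal.coe_ne_top).mpr hx
  have hAf : A ≤ choquet μ f hf := lintegral_mono fun t => μ.mono' _ _ inf_le_right
  have hAg : A ≤ choquet μ g hg := lintegral_mono fun t =>
    μ.mono' _ _ (le_trans inf_le_right (lvl_mono hf hg hfg t))
  by_cases hAtop : A = ⊤
  · have h1 : choquet μ g hg = ⊤ := top_le_iff.mp (hAtop ▸ hAg)
    have h2 : choquet μ f hf = ⊤ := top_le_iff.mp (hAtop ▸ hAf)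
    rw [h1, h2, top_add]
  · rw [hBeq, ← add_assoc] at hsum
    exact (ENNReal.add_left_inj hAtop).mp (by rw [← hsum])


noncomputable def indSum (c : ℕ → ℝ≥0) (U : ℕ → Opens X) (M : ℕ) : X → ℝ≥0∞ :=
  fun x => ∑ i ∈ Finset.range M, Set.indicator (U i : Set X) (fun _ => (c i : ℝ≥0∞)) x

lemma lsc_indSum (c : ℕ → ℝ≥0) (U : ℕ → Opens X) (M : ℕ) :
    LowerSemicontinuous (indSum c U M) := by
  induction M with
  | zero => unfold indSum; simpa using (lowerSemicontinuous_const : LowerSemicontinuous fun _ : X => (0:ℝ≥0∞))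
  | succ M ih =>
    have : indSum c U (M+1) = fun x => indSum c U M x
        + Set.indicator (U M : Set X) (fun _ => (c M : ℝ≥0∞)) x :=
      funext fun x => Finset.sum_range_succ _ _
    rw [this]
    exact ih.add ((U M).isOpen.lowerSemicontinuous_indicator zero_le)

lemma choquet_add_indSum (μ : ContValuation X) (f : X → ℝ≥0∞) (hf : LowerSemicontinuous f)
    (c : ℕ → ℝ≥0) (U : ℕ → Opens X) (M : ℕ)
    (H : LowerSemicontinuous fun x => f x + indSum c U M x) :
    choquet μ (fun x => f x + indSum c U M x) H
      = choquet μ f hf + ∑ i ∈ Finset.range M, (c i : ℝ≥0∞) * μ.toFun (U i) := by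
  induction M with
  | zero => rw [choquet_congr μ H hf (fun x => by simp [indSum])]; simp
  | succ M ih =>
    have hmid : LowerSemicontinuous fun x => f x + indSum c U M x :=
      hf.add (lsc_indSum c U M)
    have hstep : LowerSemicontinuous fun x => (f x + indSum c U M x)
        + Set.indicator (U M : Set X) (fun _ => (c M : ℝ≥0∞)) x :=
      hmid.add ((U M).isOpen.lowerSemicontinuous_indicator zero_le)
    rw [choquet_congr μ H hstep
      (fun x => by simp [indSum, Finset.sum_range_succ, add_assoc])]
    rw [choquet_add_indicator μ _ hmid (c M) (U M) hstep, ih hmid,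
      Finset.sum_range_succ, add_assoc]

lemma choquet_indSum (μ : ContValuation X) (c : ℕ → ℝ≥0) (U : ℕ → Opens X) (M : ℕ) :
    choquet μ (indSum c U M) (lsc_indSum c U M)
      = ∑ i ∈ Finset.range M, (c i : ℝ≥0∞) * μ.toFun (U i) := by
  have H : LowerSemicontinuous fun x => (0:ℝ≥0∞) + indSum c U M x := by
    simpa using lsc_indSum c U M
  rw [choquet_congr μ (lsc_indSum c U M) H (fun x => (zero_add _).symm),
    choquet_add_indSum μ _ lowerSemicontinuous_const c U M H, choquet_zero, zero_add]

lemma choquet_iSup (μ : ContValuation X) (f : ℕ → X → ℝ≥0∞)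
    (hf : ∀ n, LowerSemicontinuous (f n)) (hmono : ∀ n x, f n x ≤ f (n+1) x)
    (F : X → ℝ≥0∞) (hF : LowerSemicontinuous F) (hFeq : ∀ x, F x = ⨆ n, f n x) :
    choquet μ F hF = ⨆ n, choquet μ (f n) (hf n) := by
  have hmono' : ∀ {n m : ℕ}, n ≤ m → ∀ x, f n x ≤ f m x := by
    intro n m hnm
    induction hnm with
    | refl => exact fun x => le_rfl
    | step h ih => exact fun x => le_trans (ih x) (hmono _ x)
  have key : ∀ t, μ.toFun (lvl F hF t) = ⨆ n, μ.toFun (lvl (f n) (hf n) t) := by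
    intro t
    have hlvlmono : Monotone fun n => lvl (f n) (hf n) t :=
      fun n m hnm => lvl_mono (hf n) (hf m) (hmono' hnm) t
    have hS : (Set.range fun n => lvl (f n) (hf n) t).Nonempty := ⟨_, ⟨0, rfl⟩⟩
    have hdir : DirectedOn (· ≤ ·) (Set.range fun n => lvl (f n) (hf n) t) :=
      directedOn_range.mpr hlvlmono.directed_le
    have hscott := μ.scott' _ hS hdir
    rw [iSup_range] at hscott
    rw [← hscott]
    congr 1
    refine SetLike.ext fun x => ?_
    constructor
    · intro hx
      have hx' : ENNReal.ofReal t < ⨆ n, f n x := by rw [← hFeq]; exact hx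
      obtain ⟨n, hn⟩ := lt_iSup_iff.mp hx'
      exact Opens.mem_sSup.mpr ⟨_, ⟨n, rfl⟩, hn⟩
    · intro hx
      obtain ⟨U, ⟨n, rfl⟩, hn⟩ := Opens.mem_sSup.mp hx
      show ENNReal.ofReal t < F x
      rw [hFeq]
      exact lt_of_lt_of_le hn (le_iSup (fun n => f n x) n)
  rw [choquet_eq]
  rw [lintegral_congr fun t => key t]
  rw [lintegral_iSup (fun n => meas_val μ _ (lvl_antitone (f n) (hf n)))
    (fun n m hnm t => μ.mono' _ _ (lvl_mono (hf n) (hf m) (hmono' hnm) t))]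
  rfl


/-! ### Dyadic approximation arithmetic -/

lemma two_pow_ne_zero (n : ℕ) : ((2:ℝ≥0∞)^n) ≠ 0 := pow_ne_zero n two_ne_zero
lemma two_pow_ne_top (n : ℕ) : ((2:ℝ≥0∞)^n) ≠ ⊤ := pow_ne_top ENNReal.ofNat_ne_top
lemma two_pow_eq_ofReal (n : ℕ) : (2:ℝ≥0∞)^n = ENNReal.ofReal ((2:ℝ)^n) := by
  rw [ENNReal.ofReal_pow (by norm_num)]; norm_num

noncomputable def gg (n : ℕ) (a : ℝ≥0∞) : ℝ≥0∞ :=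
  ∑ i ∈ Finset.range (n * 2^n), if ((i:ℝ≥0∞)+1) < 2^n * a then ((2:ℝ≥0∞)^n)⁻¹ else 0

lemma sum_range_two_mul (M : ℕ) (F : ℕ → ℝ≥0∞) :
    ∑ i ∈ Finset.range (2*M), F i = ∑ i ∈ Finset.range M, (F (2*i) + F (2*i+1)) := by
  induction M with
  | zero => simp
  | succ M ih =>
    have h2 : 2*(M+1) = (2*M) + 1 + 1 := by ring
    rw [h2, Finset.sum_range_succ, Finset.sum_range_succ, ih, Finset.sum_range_succ,
      add_assoc]

lemma gg_mono (a : ℝ≥0∞) : Monotone fun n => gg n a := by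
  apply monotone_nat_of_le_succ
  intro n
  have hsub : Finset.range (2*(n*2^n)) ⊆ Finset.range ((n+1) * 2^(n+1)) := by
    apply Finset.range_subset_range.mpr
    calc 2*(n*2^n) = n * 2^(n+1) := by ring
      _ ≤ (n+1) * 2^(n+1) := Nat.mul_le_mul_right _ (Nat.le_succ n)
  calc gg n a
      = ∑ i ∈ Finset.range (n*2^n),
          (if ((i:ℝ≥0∞)+1) < 2^n * a then ((2:ℝ≥0∞)^n)⁻¹ else 0) := rfl
    _ ≤ ∑ i ∈ Finset.range (n*2^n),
          ((if ((2*i:ℕ):ℝ≥0∞)+1 < 2^(n+1) * a then ((2:ℝ≥0∞)^(n+1))⁻¹ else 0)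
          + (if ((2*i+1:ℕ):ℝ≥0∞)+1 < 2^(n+1) * a then ((2:ℝ≥0∞)^(n+1))⁻¹ else 0)) := by
        apply Finset.sum_le_sum
        intro i _
        by_cases h : ((i:ℝ≥0∞)+1) < 2^n * a
        · have hdouble : ((2:ℝ≥0∞) * ((i:ℝ≥0∞)+1)) < 2 * (2^n * a) :=
            (ENNReal.mul_lt_mul_iff_right two_ne_zero ENNReal.ofNat_ne_top).mpr h
          have h2na : (2:ℝ≥0∞) * (2^n * a) = 2^(n+1) * a := by rw [pow_succ]; ring
          have hc1 : ((2*i:ℕ):ℝ≥0∞)+1 < 2^(n+1) * a := by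
            rw [← h2na]
            refine lt_of_lt_of_le ?_ hdouble.le
            push_cast
            calc (2:ℝ≥0∞)*(i:ℝ≥0∞) + 1 < 2*(i:ℝ≥0∞) + 2 := by
                  exact ENNReal.add_lt_add_left (by simp [ENNReal.mul_ne_top,
                    ENNReal.natCast_ne_top]) one_lt_two
              _ = 2 * ((i:ℝ≥0∞)+1) := by ring
          have hc2 : ((2*i+1:ℕ):ℝ≥0∞)+1 < 2^(n+1) * a := by
            rw [← h2na]
            refine lt_of_le_of_lt ?_ hdouble
            push_cast
            calc (2:ℝ≥0∞)*(i:ℝ≥0∞) + 1 + 1 = 2*((i:ℝ≥0∞)+1) := by ring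
              _ ≤ 2 * ((i:ℝ≥0∞)+1) := le_rfl
          rw [if_pos h, if_pos hc1, if_pos hc2]
          have : ((2:ℝ≥0∞)^(n+1))⁻¹ + ((2:ℝ≥0∞)^(n+1))⁻¹ = ((2:ℝ≥0∞)^n)⁻¹ := by
            rw [← two_mul, pow_succ, ENNReal.mul_inv (Or.inl (two_pow_ne_zero n))
              (Or.inl (two_pow_ne_top n)), mul_comm ((2:ℝ≥0∞)^n)⁻¹ (2:ℝ≥0∞)⁻¹,
              ← mul_assoc, ENNReal.mul_inv_cancel two_ne_zero ENNReal.ofNat_ne_top, one_mul]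
          rw [this]
        · rw [if_neg h]
          exact zero_le
    _ = ∑ i ∈ Finset.range (2*(n*2^n)),
          (if ((i:ℝ≥0∞)+1) < 2^(n+1) * a then ((2:ℝ≥0∞)^(n+1))⁻¹ else 0) := by
        rw [sum_range_two_mul]
    _ ≤ gg (n+1) a := Finset.sum_le_sum_of_subset hsub

lemma card_le_of_forall (s : Finset ℕ) (b : ℝ≥0∞) (hs : ∀ i ∈ s, ((i:ℝ≥0∞)+1) ≤ b) :
    (s.card : ℝ≥0∞) ≤ b := by
  rcases s.eq_empty_or_nonempty with he | hne
  · simp [he]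
  · set m := s.max' hne with hm
    have hmem : m ∈ s := s.max'_mem hne
    have hsub : s ⊆ Finset.range (m+1) := fun i hi =>
      Finset.mem_range.mpr (Nat.lt_succ_of_le (s.le_max' i hi))
    have hcard : s.card ≤ m + 1 := le_trans (Finset.card_le_card hsub) (by simp)
    calc (s.card : ℝ≥0∞) ≤ ((m+1:ℕ):ℝ≥0∞) := by exact_mod_cast hcard
      _ = (m:ℝ≥0∞)+1 := by push_cast; ring
      _ ≤ b := hs m hmem

lemma gg_le (n : ℕ) (a : ℝ≥0∞) : gg n a ≤ a := by
  classical
  rw [gg, ← Finset.sum_filter, Finset.sum_const, nsmul_eq_mul]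
  refine le_trans (mul_le_mul_left
    (card_le_of_forall _ (2^n * a) (fun i hi => (Finset.mem_filter.mp hi).2.le)) _) ?_
  rw [mul_comm ((2:ℝ≥0∞)^n) a, mul_assoc,
    ENNReal.mul_inv_cancel (two_pow_ne_zero n) (two_pow_ne_top n), mul_one]

lemma gg_ge_aux (n m : ℕ) (a : ℝ≥0∞) (hm : m ≤ n * 2^n) (hma : (m:ℝ≥0∞) < 2^n * a) :
    (m:ℝ≥0∞) * ((2:ℝ≥0∞)^n)⁻¹ ≤ gg n a := by
  have h1 : ∀ i ∈ Finset.range m, ((i:ℝ≥0∞)+1) < 2^n * a := by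
    intro i hi
    have : (i + 1 : ℕ) ≤ m := Finset.mem_range.mp hi
    calc ((i:ℝ≥0∞)+1) = ((i+1:ℕ):ℝ≥0∞) := by push_cast; ring
      _ ≤ (m:ℝ≥0∞) := by exact_mod_cast this
      _ < 2^n * a := hma
  calc (m:ℝ≥0∞) * ((2:ℝ≥0∞)^n)⁻¹
      = ∑ i ∈ Finset.range m, ((2:ℝ≥0∞)^n)⁻¹ := by
        rw [Finset.sum_const, Finset.card_range, nsmul_eq_mul]
    _ = ∑ i ∈ Finset.range m, (if ((i:ℝ≥0∞)+1) < 2^n * a then ((2:ℝ≥0∞)^n)⁻¹ else 0) :=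
        (Finset.sum_congr rfl (fun i hi => by rw [if_pos (h1 i hi)])).symm
    _ ≤ gg n a := Finset.sum_le_sum_of_subset
        (Finset.range_subset_range.mpr hm)

lemma gg_iSup (a : ℝ≥0∞) : ⨆ n, gg n a = a := by
  apply le_antisymm
  · exact iSup_le fun n => gg_le n a
  · by_cases ha : a = ⊤
    · subst ha
      refine le_trans (le_of_eq ENNReal.iSup_natCast.symm) (iSup_le fun n => ?_)
      refine le_trans ?_ (le_iSup _ n)
      have hkey : ((n * 2^n : ℕ):ℝ≥0∞) * ((2:ℝ≥0∞)^n)⁻¹ ≤ gg n ⊤ := by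
        apply gg_ge_aux n _ ⊤ le_rfl
        rw [ENNReal.mul_top (two_pow_ne_zero n)]
        exact ENNReal.natCast_lt_top _
      refine le_trans (le_of_eq ?_) hkey
      push_cast
      rw [mul_assoc, ENNReal.mul_inv_cancel (two_pow_ne_zero n) (two_pow_ne_top n), mul_one]
    · -- a finite
      apply le_of_forall_lt_imp_le_of_dense
      intro b hb
      have hbt : b ≠ ⊤ := fun h => ha (top_le_iff.mp (h ▸ hb.le))
      set a' := a.toReal with ha'
      set b' := b.toReal with hb'
      have hb'a' : b' < a' := (ENNReal.toReal_lt_toReal hbt ha).mpr hb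
      have hb'0 : 0 ≤ b' := ENNReal.toReal_nonneg
      have hd : 0 < a' - b' := by linarith
      obtain ⟨n₁, hn₁⟩ := pow_unbounded_of_one_lt (y := (2:ℝ)) (a' - b')⁻¹ one_lt_two
      obtain ⟨n₂, hn₂⟩ := exists_nat_ge (b' + 1)
      set n := max n₁ n₂ with hn
      have hpow : (2:ℝ)^n₁ ≤ 2^n := pow_le_pow_right₀ one_le_two (le_max_left _ _)
      have h1 : 1 < 2^n * (a' - b') := by
        have h2 : (a'-b')⁻¹ < 2^n := lt_of_lt_of_le hn₁ hpow
        have h3 := mul_lt_mul_of_pos_right h2 hd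
        rw [inv_mul_cancel₀ (ne_of_gt hd)] at h3
        exact h3
      have hb1n : b' + 1 ≤ (n:ℝ) := le_trans hn₂ (by exact_mod_cast le_max_right n₁ n₂)
      set m := ⌈2^n * b'⌉₊ with hmdef
      have hpn : (0:ℝ) < 2^n := by positivity
      have hub : (m:ℝ) < 2^n * b' + 1 := Nat.ceil_lt_add_one (by positivity)
      have hlb : 2^n * b' ≤ (m:ℝ) := Nat.le_ceil _
      have hmn : m ≤ n * 2^n := by
        have : (m:ℝ) ≤ ((n * 2^n : ℕ):ℝ) := by
          push_cast
          have hp1 : (1:ℝ) ≤ 2^n := one_le_pow₀ one_le_two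
          calc (m:ℝ) ≤ 2^n * b' + 1 := hub.le
            _ ≤ 2^n * b' + 2^n := by linarith
            _ = 2^n * (b' + 1) := by ring
            _ ≤ 2^n * n := mul_le_mul_of_nonneg_left hb1n hpn.le
            _ = n * 2^n := by ring
        exact_mod_cast this
      have hma : (m:ℝ≥0∞) < 2^n * a := by
        have hreal : (m:ℝ) < 2^n * a' := by nlinarith
        have : ENNReal.ofReal (m:ℝ) < ENNReal.ofReal (2^n * a') :=
          (ENNReal.ofReal_lt_ofReal_iff
            (lt_of_le_of_lt (Nat.cast_nonneg m) hreal)).mpr hreal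
        rw [ENNReal.ofReal_natCast] at this
        rw [ENNReal.ofReal_mul (by positivity), ← two_pow_eq_ofReal,
          ENNReal.ofReal_toReal ha] at this
        exact this
      have hbm : b ≤ (m:ℝ≥0∞) * ((2:ℝ≥0∞)^n)⁻¹ := by
        have hreal : b' ≤ (m:ℝ) * ((2:ℝ)^n)⁻¹ := by
          have hdiv : b' ≤ (m:ℝ)/2^n := (le_div_iff₀ hpn).mpr (by linarith)
          rw [div_eq_mul_inv] at hdiv
          exact hdiv
        have := ENNReal.ofReal_le_ofReal hreal
        rw [ENNReal.ofReal_mul (by positivity), ENNReal.ofReal_natCast,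
          ENNReal.ofReal_inv_of_pos hpn, ← two_pow_eq_ofReal,
          ENNReal.ofReal_toReal hbt] at this
        exact this
      exact le_trans hbm (le_trans (gg_ge_aux n m a hmn hma) (le_iSup (fun k => gg k a) n))


/-! ### Dyadic approximation of a lower semicontinuous function -/

noncomputable def dyU (h : X → ℝ≥0∞) (hh : LowerSemicontinuous h) (n : ℕ) (i : ℕ) : Opens X :=
  ⟨h ⁻¹' Set.Ioi (((i:ℝ≥0∞)+1) / 2^n), hh.isOpen_preimage _⟩

lemma approx_apply (c : ℝ≥0) (h : X → ℝ≥0∞) (hh : LowerSemicontinuous h) (n : ℕ) (x : X) :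
    indSum (fun _ => c/2^n) (dyU h hh n) (n*2^n) x = (c:ℝ≥0∞) * gg n (h x) := by
  rw [indSum, gg, Finset.mul_sum]
  apply Finset.sum_congr rfl
  intro i _
  rw [Set.indicator_apply]
  have hiff : (x ∈ (dyU h hh n i : Set X)) ↔ (((i:ℝ≥0∞)+1) < 2^n * h x) := by
    show (((i:ℝ≥0∞)+1) / 2^n < h x) ↔ _
    rw [ENNReal.div_lt_iff (Or.inl (two_pow_ne_zero n)) (Or.inl (two_pow_ne_top n)),
      mul_comm]
  have hcoe : ((c/2^n : ℝ≥0) : ℝ≥0∞) = (c:ℝ≥0∞) * ((2:ℝ≥0∞)^n)⁻¹ := by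
    rw [ENNReal.coe_div (by positivity), div_eq_mul_inv]
    push_cast
    ring
  by_cases hx : ((i:ℝ≥0∞)+1) < 2^n * h x
  · rw [if_pos (hiff.mpr hx), if_pos hx, hcoe]
  · rw [if_neg (fun hc => hx (hiff.mp hc)), if_neg hx, mul_zero]

lemma sum_scale (μ : ContValuation X) (c : ℝ≥0) (U : ℕ → Opens X) (n M : ℕ) :
    ∑ i ∈ Finset.range M, ((c/2^n : ℝ≥0):ℝ≥0∞) * μ.toFun (U i)
      = (c:ℝ≥0∞) * ∑ i ∈ Finset.range M, (((1:ℝ≥0)/2^n : ℝ≥0):ℝ≥0∞) * μ.toFun (U i) := by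
  rw [Finset.mul_sum]
  apply Finset.sum_congr rfl
  intro i _
  rw [← mul_assoc]
  congr 1
  rw [← ENNReal.coe_mul]
  congr 1
  rw [mul_one_div, div_eq_div_iff] <;> simp

end ChoquetAux

open ChoquetAux

/-- The Choquet integral is linear in the integrand: for a continuous valuation `μ`, lower
semicontinuous `h, k : X → [0,∞]` and nonnegative reals `r, s`,
`∫ (r·h + s·k) dμ = r·∫ h dμ + s·∫ k dμ`. -/
theorem choquet_linear_integrand {X : Type*} [TopologicalSpace X]
    (μ : ContValuation X) (h k : X → ℝ≥0∞)
    (hh : LowerSemicontinuous h) (hk : LowerSemicontinuous k) (r s : ℝ≥0)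
    (hcomb : LowerSemicontinuous fun x => (r : ℝ≥0∞) * h x + (s : ℝ≥0∞) * k x) :
    choquet μ (fun x => (r : ℝ≥0∞) * h x + (s : ℝ≥0∞) * k x) hcomb =
      (r : ℝ≥0∞) * choquet μ h hh + (s : ℝ≥0∞) * choquet μ k hk := by
  classical
  set Th : ℕ → ℝ≥0∞ := fun n => ∑ i ∈ Finset.range (n*2^n),
    (((1:ℝ≥0)/2^n : ℝ≥0):ℝ≥0∞) * μ.toFun (dyU h hh n i) with hThdef
  set Tk : ℕ → ℝ≥0∞ := fun n => ∑ i ∈ Finset.range (n*2^n),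
    (((1:ℝ≥0)/2^n : ℝ≥0):ℝ≥0∞) * μ.toFun (dyU k hk n i) with hTkdef
  have hstep : ∀ (f : X → ℝ≥0∞) (hf : LowerSemicontinuous f),
      choquet μ f hf = ⨆ n, ∑ i ∈ Finset.range (n*2^n),
        (((1:ℝ≥0)/2^n : ℝ≥0):ℝ≥0∞) * μ.toFun (dyU f hf n i) := by
    intro f hf
    rw [choquet_iSup μ (fun n => indSum (fun _ => (1:ℝ≥0)/2^n) (dyU f hf n) (n*2^n))
      (fun n => lsc_indSum _ _ _)
      (fun n x => by
        show indSum (fun _ => (1:ℝ≥0)/2^n) (dyU f hf n) (n*2^n) x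
          ≤ indSum (fun _ => (1:ℝ≥0)/2^(n+1)) (dyU f hf (n+1)) ((n+1)*2^(n+1)) x
        rw [approx_apply, approx_apply]
        exact mul_le_mul_right (gg_mono (f x) (Nat.le_succ n)) _)
      f hf
      (fun x => by
        show f x = ⨆ n, indSum (fun _ => (1:ℝ≥0)/2^n) (dyU f hf n) (n*2^n) x
        calc f x = ⨆ n, gg n (f x) := (gg_iSup (f x)).symm
          _ = ⨆ n, indSum (fun _ => (1:ℝ≥0)/2^n) (dyU f hf n) (n*2^n) x :=
            iSup_congr fun n => by rw [approx_apply, ENNReal.coe_one, one_mul])]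
    exact iSup_congr fun n => choquet_indSum μ _ _ _
  have hThmono : Monotone Th := by
    intro n m hnm
    show (∑ i ∈ Finset.range (n*2^n), (((1:ℝ≥0)/2^n : ℝ≥0):ℝ≥0∞) * μ.toFun (dyU h hh n i))
      ≤ ∑ i ∈ Finset.range (m*2^m), (((1:ℝ≥0)/2^m : ℝ≥0):ℝ≥0∞) * μ.toFun (dyU h hh m i)
    rw [← choquet_indSum μ (fun _ => (1:ℝ≥0)/2^n) (dyU h hh n) (n*2^n),
      ← choquet_indSum μ (fun _ => (1:ℝ≥0)/2^m) (dyU h hh m) (m*2^m)]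
    apply choquet_mono
    intro x
    rw [approx_apply, approx_apply]
    exact mul_le_mul_right (gg_mono (h x) hnm) _
  have hTkmono : Monotone Tk := by
    intro n m hnm
    show (∑ i ∈ Finset.range (n*2^n), (((1:ℝ≥0)/2^n : ℝ≥0):ℝ≥0∞) * μ.toFun (dyU k hk n i))
      ≤ ∑ i ∈ Finset.range (m*2^m), (((1:ℝ≥0)/2^m : ℝ≥0):ℝ≥0∞) * μ.toFun (dyU k hk m i)
    rw [← choquet_indSum μ (fun _ => (1:ℝ≥0)/2^n) (dyU k hk n) (n*2^n),
      ← choquet_indSum μ (fun _ => (1:ℝ≥0)/2^m) (dyU k hk m) (m*2^m)]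
    apply choquet_mono
    intro x
    rw [approx_apply, approx_apply]
    exact mul_le_mul_right (gg_mono (k x) hnm) _
  set Fn : ℕ → X → ℝ≥0∞ := fun n x =>
    indSum (fun _ => r/2^n) (dyU h hh n) (n*2^n) x
      + indSum (fun _ => s/2^n) (dyU k hk n) (n*2^n) x with hFndef
  have hFlsc : ∀ n, LowerSemicontinuous (Fn n) :=
    fun n => (lsc_indSum _ _ _).add (lsc_indSum _ _ _)
  have hFmono : ∀ n x, Fn n x ≤ Fn (n+1) x := by
    intro n x
    show indSum (fun _ => r/2^n) (dyU h hh n) (n*2^n) x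
        + indSum (fun _ => s/2^n) (dyU k hk n) (n*2^n) x
      ≤ indSum (fun _ => r/2^(n+1)) (dyU h hh (n+1)) ((n+1)*2^(n+1)) x
        + indSum (fun _ => s/2^(n+1)) (dyU k hk (n+1)) ((n+1)*2^(n+1)) x
    rw [approx_apply, approx_apply, approx_apply, approx_apply]
    exact add_le_add (mul_le_mul_right (gg_mono (h x) (Nat.le_succ n)) _)
      (mul_le_mul_right (gg_mono (k x) (Nat.le_succ n)) _)
  have hFeq : ∀ x, (r:ℝ≥0∞) * h x + (s:ℝ≥0∞) * k x = ⨆ n, Fn n x := by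
    intro x
    show (r:ℝ≥0∞) * h x + (s:ℝ≥0∞) * k x
      = ⨆ n, (indSum (fun _ => r/2^n) (dyU h hh n) (n*2^n) x
        + indSum (fun _ => s/2^n) (dyU k hk n) (n*2^n) x)
    have hm1 : Monotone fun n => (r:ℝ≥0∞) * gg n (h x) :=
      fun n m hnm => mul_le_mul_right (gg_mono (h x) hnm) _
    have hm2 : Monotone fun n => (s:ℝ≥0∞) * gg n (k x) :=
      fun n m hnm => mul_le_mul_right (gg_mono (k x) hnm) _
    calc (r:ℝ≥0∞) * h x + (s:ℝ≥0∞) * k x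
        = (⨆ n, (r:ℝ≥0∞) * gg n (h x)) + (⨆ n, (s:ℝ≥0∞) * gg n (k x)) := by
          rw [← ENNReal.mul_iSup, ← ENNReal.mul_iSup, gg_iSup, gg_iSup]
      _ = ⨆ n, ((r:ℝ≥0∞) * gg n (h x) + (s:ℝ≥0∞) * gg n (k x)) :=
          ENNReal.iSup_add_iSup_of_monotone hm1 hm2
      _ = ⨆ n, (indSum (fun _ => r/2^n) (dyU h hh n) (n*2^n) x
          + indSum (fun _ => s/2^n) (dyU k hk n) (n*2^n) x) :=
          iSup_congr fun n => by rw [approx_apply, approx_apply]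
  have hch : ∀ n, choquet μ (Fn n) (hFlsc n) = (r:ℝ≥0∞) * Th n + (s:ℝ≥0∞) * Tk n := by
    intro n
    have hadd := choquet_add_indSum μ (indSum (fun _ => r/2^n) (dyU h hh n) (n*2^n))
      (lsc_indSum _ _ _) (fun _ => s/2^n) (dyU k hk n) (n*2^n) (hFlsc n)
    refine Eq.trans hadd ?_
    rw [choquet_indSum μ _ _ _, sum_scale μ r (dyU h hh n) n (n*2^n),
      sum_scale μ s (dyU k hk n) n (n*2^n)]
  calc choquet μ (fun x => (r : ℝ≥0∞) * h x + (s : ℝ≥0∞) * k x) hcomb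
      = ⨆ n, choquet μ (Fn n) (hFlsc n) :=
        choquet_iSup μ Fn hFlsc hFmono _ hcomb hFeq
    _ = ⨆ n, ((r:ℝ≥0∞) * Th n + (s:ℝ≥0∞) * Tk n) := iSup_congr hch
    _ = (⨆ n, (r:ℝ≥0∞) * Th n) + (⨆ n, (s:ℝ≥0∞) * Tk n) :=
        (ENNReal.iSup_add_iSup_of_monotone
          (fun n m hnm => mul_le_mul_right (hThmono hnm) _)
          (fun n m hnm => mul_le_mul_right (hTkmono hnm) _)).symm
    _ = (r:ℝ≥0∞) * (⨆ n, Th n) + (s:ℝ≥0∞) * (⨆ n, Tk n) := by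
        rw [← ENNReal.mul_iSup, ← ENNReal.mul_iSup]
    _ = (r : ℝ≥0∞) * choquet μ h hh + (s : ℝ≥0∞) * choquet μ k hk := by
        rw [hstep h hh, hstep k hk]
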